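/- Let M, H be d×d max-plus matrices and A, B the first components of (M,H)^m and (M,H)^n with m > n ≥ 2. Then the common key K = A ⊕ B ⊕ H^{∘n} ⊕ (A ⊗ H^{∘n}) simplifies to K = A ⊗ (I ⊕ H)^{⊗n}. -/

import Mathlib

open Finset

abbrev Rmax : Type := WithBot ℝ

/-- Tropical (max-plus) matrix product. -/
noncomputable def trMul {l m n : ℕ} (A : Matrix (Fin l) (Fin m) Rmax) (B : Matrix (Fin m) (Fin n) Rmax) :
    Matrix (Fin l) (Fin n) Rmax :=
  fun i j => univ.sup fun k => A i k + B k j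

/-- Entrywise tropical sum (max) of matrices. -/
noncomputable def trSup {m n : ℕ} (A B : Matrix (Fin m) (Fin n) Rmax) : Matrix (Fin m) (Fin n) Rmax :=
  fun i j => A i j ⊔ B i j

/-- Tropical identity matrix. -/
noncomputable def trId (d : ℕ) : Matrix (Fin d) (Fin d) Rmax := fun i j => if i = j then 0 else ⊥

/-- Tropical matrix powers, `trPow A 0 = I`. -/
noncomputable def trPow {d : ℕ} (A : Matrix (Fin d) (Fin d) Rmax) : ℕ → Matrix (Fin d) (Fin d) Rmax
  | 0 => trId d
  | n + 1 => trMul (trPow A n) A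

/-- Adjoint product `A ∘ B = A ⊕ B ⊕ (A ⊗ B)`. -/
noncomputable def adj {d : ℕ} (A B : Matrix (Fin d) (Fin d) Rmax) : Matrix (Fin d) (Fin d) Rmax :=
  trSup (trSup A B) (trMul A B)

/-- Adjoint powers: `adjPow A n = A^{∘n}` for `n ≥ 1` (value at 0 is junk `A`). -/
noncomputable def adjPow {d : ℕ} (A : Matrix (Fin d) (Fin d) Rmax) : ℕ → Matrix (Fin d) (Fin d) Rmax
  | 0 => A
  | 1 => A
  | n + 2 => adj (adjPow A (n + 1)) A

/-- Semidirect product of pairs: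
`(M,G)·(A,H) = (M ⊕ A ⊕ H ⊕ (M ⊗ H), G ∘ H)`. -/
noncomputable def sd {d : ℕ} (p q : Matrix (Fin d) (Fin d) Rmax × Matrix (Fin d) (Fin d) Rmax) :
    Matrix (Fin d) (Fin d) Rmax × Matrix (Fin d) (Fin d) Rmax :=
  (trSup (trSup (trSup p.1 q.1) q.2) (trMul p.1 q.2), adj p.2 q.2)

/-- Semidirect powers: `sdPow p n = p^n` for `n ≥ 1` (value at 0 is junk `p`). -/
noncomputable def sdPow {d : ℕ} (p : Matrix (Fin d) (Fin d) Rmax × Matrix (Fin d) (Fin d) Rmax) :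
    ℕ → Matrix (Fin d) (Fin d) Rmax × Matrix (Fin d) (Fin d) Rmax
  | 0 => p
  | 1 => p
  | n + 2 => sd (sdPow p (n + 1)) p

/-- Maximum cycle mean `λ(F)`: maximum over cycles `(c 0, c 1, …, c k, c 0)` of
the average arc weight. -/
noncomputable def mcm {d : ℕ} (F : Matrix (Fin d) (Fin d) Rmax) : Rmax :=
  univ.sup fun kc : Σ k : Fin d, Fin (k.1 + 1) → Fin d =>
    (∑ i, F (kc.2 i) (kc.2 (i + 1))).map fun w => w / ((kc.1 : ℕ) + 1)

/-- Metric matrix `A⁺ = A ⊕ A^{⊗2} ⊕ ⋯ ⊕ A^{⊗d}`. -/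
noncomputable def metric {d : ℕ} (A : Matrix (Fin d) (Fin d) Rmax) : Matrix (Fin d) (Fin d) Rmax :=
  fun i j => (Finset.Icc 1 d).sup fun k => trPow A k i j

/-- Kleene star `A* = I ⊕ A ⊕ ⋯ ⊕ A^{⊗(d-1)}`. -/
noncomputable def kstar {d : ℕ} (A : Matrix (Fin d) (Fin d) Rmax) : Matrix (Fin d) (Fin d) Rmax :=
  fun i j => (Finset.range d).sup fun k => trPow A k i j

/-- `F` is irreducible: its weighted digraph is strongly connected. -/
def TrIrreducible {d : ℕ} (F : Matrix (Fin d) (Fin d) Rmax) : Prop :=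
  ∀ i j : Fin d, Relation.ReflTransGen (fun a b => F a b ≠ ⊥) i j

section KeyAux

variable {d : ℕ}

lemma rmax_add_sup (a b c : Rmax) : a + (b ⊔ c) = (a + b) ⊔ (a + c) := by
  rcases le_total b c with h | h
  · rw [sup_eq_right.2 h, sup_eq_right.2 (add_le_add_right h a)]
  · rw [sup_eq_left.2 h, sup_eq_left.2 (add_le_add_right h a)]

lemma rmax_sup_add (a b c : Rmax) : (a ⊔ b) + c = (a + c) ⊔ (b + c) := by
  rcases le_total a b with h | h
  · rw [sup_eq_right.2 h, sup_eq_right.2 (add_le_add_left h c)]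
  · rw [sup_eq_left.2 h, sup_eq_left.2 (add_le_add_left h c)]

lemma finsup_sup {α : Type*} (s : Finset α) (f g : α → Rmax) :
    (s.sup fun k => f k ⊔ g k) = s.sup f ⊔ s.sup g := by
  apply le_antisymm
  · exact Finset.sup_le fun k hk => sup_le_sup (Finset.le_sup hk) (Finset.le_sup hk)
  · exact sup_le (Finset.sup_mono_fun fun k _ => le_sup_left)
      (Finset.sup_mono_fun fun k _ => le_sup_right)

lemma trMul_sup_right (A B C : Matrix (Fin d) (Fin d) Rmax) :
    trMul A (trSup B C) = trSup (trMul A B) (trMul A C) := by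
  funext i j
  simp only [trMul, trSup]
  rw [← finsup_sup]
  congr 1; funext k; exact rmax_add_sup _ _ _

lemma trMul_sup_left (A B C : Matrix (Fin d) (Fin d) Rmax) :
    trMul (trSup A B) C = trSup (trMul A C) (trMul B C) := by
  funext i j
  simp only [trMul, trSup]
  rw [← finsup_sup]
  congr 1; funext k; exact rmax_sup_add _ _ _

lemma trMul_id (A : Matrix (Fin d) (Fin d) Rmax) : trMul A (trId d) = A := by
  funext i j
  apply le_antisymm
  · apply Finset.sup_le; intro k _
    by_cases h : k = j
    · subst h; simp [trId]
    · simp [trId, h]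
  · have := Finset.le_sup (f := fun k => A i k + trId d k j) (Finset.mem_univ j)
    simpa [trId, trMul] using this

lemma id_trMul (A : Matrix (Fin d) (Fin d) Rmax) : trMul (trId d) A = A := by
  funext i j
  apply le_antisymm
  · apply Finset.sup_le; intro k _
    by_cases h : i = k
    · subst h; simp [trId]
    · simp [trId, h]
  · have := Finset.le_sup (f := fun k => trId d i k + A k j) (Finset.mem_univ i)
    simpa [trId, trMul] using this

/-- Entrywise order on tropical matrices. -/
def mle (A B : Matrix (Fin d) (Fin d) Rmax) : Prop := ∀ i j, A i j ≤ B i j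

lemma trMul_mono_left {X Y Z : Matrix (Fin d) (Fin d) Rmax} (h : mle X Y) :
    mle (trMul X Z) (trMul Y Z) :=
  fun i j => Finset.sup_mono_fun fun k _ => add_le_add_left (h i k) _

lemma sdPow_add2 (p : Matrix (Fin d) (Fin d) Rmax × Matrix (Fin d) (Fin d) Rmax) (k : ℕ) :
    sdPow p (k + 2) = sd (sdPow p (k + 1)) p := rfl

lemma adjPow_add2 (A : Matrix (Fin d) (Fin d) Rmax) (k : ℕ) :
    adjPow A (k + 2) = adj (adjPow A (k + 1)) A := rfl

lemma sdPow_succ_le (p : Matrix (Fin d) (Fin d) Rmax × Matrix (Fin d) (Fin d) Rmax)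
    {k : ℕ} (hk : 1 ≤ k) : mle (sdPow p k).1 (sdPow p (k + 1)).1 := by
  obtain ⟨k', rfl⟩ := Nat.exists_eq_add_of_le' hk
  rw [sdPow_add2]
  intro i j
  exact le_sup_of_le_left (le_sup_of_le_left le_sup_left)

lemma sdPow_mono (p : Matrix (Fin d) (Fin d) Rmax × Matrix (Fin d) (Fin d) Rmax)
    {a b : ℕ} (ha : 1 ≤ a) (hab : a ≤ b) : mle (sdPow p a).1 (sdPow p b).1 := by
  induction b, hab using Nat.le_induction with
  | base => exact fun i j => le_rfl
  | succ b hb ih =>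
    intro i j
    exact (ih i j).trans (sdPow_succ_le p (ha.trans hb) i j)

lemma adjPow_le_sdPow (M H : Matrix (Fin d) (Fin d) Rmax) {k : ℕ} (hk : 1 ≤ k) :
    mle (adjPow H k) (sdPow (M, H) (k + 1)).1 := by
  induction k, hk using Nat.le_induction with
  | base =>
    intro i j
    show H i j ≤ (sd (sdPow (M, H) 1) (M, H)).1 i j
    exact le_sup_of_le_left le_sup_right
  | succ k hk ih =>
    obtain ⟨k', rfl⟩ := Nat.exists_eq_add_of_le' hk
    rw [adjPow_add2, sdPow_add2]
    intro i j
    have hPA : mle (adjPow H (k' + 1)) (sdPow (M, H) (k' + 2)).1 := ih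
    show ((adjPow H (k' + 1) i j ⊔ H i j) ⊔ trMul (adjPow H (k' + 1)) H i j) ≤
      (((sdPow (M, H) (k' + 2)).1 i j ⊔ M i j) ⊔ H i j) ⊔
        trMul (sdPow (M, H) (k' + 2)).1 H i j
    apply sup_le (sup_le _ _) _
    · exact le_sup_of_le_left (le_sup_of_le_left (le_sup_of_le_left (hPA i j)))
    · exact le_sup_of_le_left le_sup_right
    · exact le_sup_of_le_right (trMul_mono_left hPA i j)

lemma trPow_sup_id (H : Matrix (Fin d) (Fin d) Rmax) {n : ℕ} (hn : 1 ≤ n) :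
    trPow (trSup (trId d) H) n = trSup (trId d) (adjPow H n) := by
  induction n, hn using Nat.le_induction with
  | base =>
    show trMul (trId d) (trSup (trId d) H) = trSup (trId d) H
    exact id_trMul _
  | succ n hn ih =>
    obtain ⟨k, rfl⟩ := Nat.exists_eq_add_of_le' hn
    show trMul (trPow (trSup (trId d) H) (k + 1)) (trSup (trId d) H) = _
    rw [ih, adjPow_add2]
    simp only [trMul_sup_left, trMul_sup_right, trMul_id, id_trMul]
    funext i j
    simp only [trSup, adj]
    generalize adjPow H (k + 1) i j = p
    generalize trMul (adjPow H (k + 1)) H i j = q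
    generalize trId d i j = e
    generalize H i j = h
    ac_rfl

end KeyAux

theorem key_simplification {d : ℕ} (M H : Matrix (Fin d) (Fin d) Rmax) (m n : ℕ)
    (hn : 2 ≤ n) (hmn : m > n) (A B : Matrix (Fin d) (Fin d) Rmax)
    (hA : A = (sdPow (M, H) m).1) (hB : B = (sdPow (M, H) n).1) :
    trSup (trSup (trSup A B) (adjPow H n)) (trMul A (adjPow H n)) =
      trMul A (trPow (trSup (trId d) H) n) := by
  subst hA hB
  have hBA : mle (sdPow (M, H) n).1 (sdPow (M, H) m).1 :=
    sdPow_mono _ (by omega) (le_of_lt hmn)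
  have hPA : mle (adjPow H n) (sdPow (M, H) m).1 := fun i j =>
    (adjPow_le_sdPow M H (by omega) i j).trans (sdPow_mono _ (by omega) (by omega) i j)
  rw [trPow_sup_id H (by omega), trMul_sup_right, trMul_id]
  funext i j
  simp only [trSup]
  rw [sup_eq_left.2 (hBA i j), sup_eq_left.2 (hPA i j)]
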